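/- arXiv:1610.02930 — 4 statements merged into one kernel-verified Lean document; each statement's English description precedes it below -/
import Mathlib

section
/- Let 1 ≤ p < q be coprime integers. A periodic symbolic sequence x ∈ W_{p,q} is maximin if and only if it is p,q-ordered. -/
/-- The shift operator on binary symbolic sequences. -/
def shift (x : ℕ → Bool) : ℕ → Bool := fun i => x (i + 1)

/-- `Wpq p q` is the set of `q`-periodic binary sequences whose fundamental block of
length `q` contains exactly `p` symbols `1` (`true`). -/
def Wpq (p q : ℕ) : Set (ℕ → Bool) :=
  {x | (∀ i, x (i + q) = x i) ∧
    ((Finset.range q).filter (fun i => x i = true)).card = p}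

/-- The lexicographic minimum of the first `q` shifts of `x` (junk value if `q = 0`). -/
noncomputable def minShift (q : ℕ) (x : ℕ → Bool) : Lex (ℕ → Bool) :=
  if h : 0 < q then
    (Finset.range q).inf' (Finset.nonempty_range_iff.mpr h.ne')
      (fun k => toLex (shift^[k] x))
  else toLex x

/-- `x` is maximin in `W_{p,q}`: the minimum of its `q` shifts is the largest such
minimum among all members of `W_{p,q}`. -/
def IsMaximin (p q : ℕ) (x : ℕ → Bool) : Prop :=
  ∀ y ∈ Wpq p q, minShift q y ≤ minShift q x

/-- `x` is `p,q`-ordered: its `q` shifts are pairwise distinct, and when the shifts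
`σ^{i_j}(x)` are listed in increasing lexicographic order, the differences
`i_j − i_{j−1}` are constant modulo `q`. -/
def IsPQOrdered (q : ℕ) (x : ℕ → Bool) : Prop :=
  (∀ k₁ < q, ∀ k₂ < q, shift^[k₁] x = shift^[k₂] x → k₁ = k₂) ∧
  ∃ (i : Fin q → Fin q) (c : ℕ), Function.Bijective i ∧
    (∀ j₁ j₂ : Fin q, j₁ < j₂ →
      toLex (shift^[(i j₁ : ℕ)] x) < toLex (shift^[(i j₂ : ℕ)] x)) ∧
    (∀ j : Fin q, ∀ hj : (j : ℕ) + 1 < q,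
      ((i ⟨(j : ℕ) + 1, hj⟩ : ℕ)) % q = ((i j : ℕ) + c) % q)

namespace MK

/-! ### Generic lemmas -/

lemma lex_lt_iff {f g : ℕ → Bool} :
    toLex f < toLex g ↔ ∃ i, (∀ j, j < i → f j = g j) ∧ f i < g i := Iff.rfl

lemma shift_iter_apply (x : ℕ → Bool) (k i : ℕ) : shift^[k] x i = x (i + k) := by
  induction k generalizing x i with
  | zero => rfl
  | succ n ih =>
    rw [Function.iterate_succ_apply, ih, shift]
    congr 1

lemma periodic_mod {q : ℕ} (hq : 0 < q) {w : ℕ → Bool} (hw : ∀ i, w (i + q) = w i)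
    (i : ℕ) : w i = w (i % q) := by
  induction i using Nat.strong_induction_on with
  | _ i ih =>
    rcases lt_or_ge i q with h | h
    · rw [Nat.mod_eq_of_lt h]
    · have e1 : i - q + q = i := by omega
      calc w i = w (i - q + q) := by rw [e1]
        _ = w (i - q) := hw _
        _ = w ((i - q) % q) := ih _ (by omega)
        _ = w (i % q) := by rw [← Nat.mod_eq_sub_mod h]

lemma periodic_ext {q : ℕ} (hq : 0 < q) {w z : ℕ → Bool} (hw : ∀ i, w (i + q) = w i)
    (hz : ∀ i, z (i + q) = z i) (h : ∀ i < q, w i = z i) : w = z := by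
  funext i
  rw [periodic_mod hq hw, periodic_mod hq hz]
  exact h _ (Nat.mod_lt _ hq)

lemma shift_iter_mod {q : ℕ} (hq : 0 < q) {x : ℕ → Bool} (hx : ∀ i, x (i + q) = x i)
    (k : ℕ) : shift^[k] x = shift^[k % q] x := by
  funext i
  rw [shift_iter_apply, shift_iter_apply, periodic_mod hq hx (i + k),
    periodic_mod hq hx (i + k % q), Nat.add_mod_mod]

/-! ### Prefix sums -/

/-- Number of `true`s among the first `m` values. -/
def S (y : ℕ → Bool) (m : ℕ) : ℕ := ((Finset.range m).filter (fun i => y i = true)).card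

lemma S_zero (y : ℕ → Bool) : S y 0 = 0 := rfl

lemma S_succ (y : ℕ → Bool) (m : ℕ) :
    S y (m + 1) = S y m + (if y m = true then 1 else 0) := by
  unfold S
  rw [Finset.range_add_one, Finset.filter_insert]
  split_ifs with h
  · rw [Finset.card_insert_of_notMem (by simp)]
  · omega

lemma S_mono (y : ℕ → Bool) {m₁ m₂ : ℕ} (h : m₁ ≤ m₂) : S y m₁ ≤ S y m₂ :=
  Finset.card_le_card (Finset.filter_subset_filter _ (Finset.range_subset_range.mpr h))

lemma S_congr {y z : ℕ → Bool} (m : ℕ) (h : ∀ i < m, y i = z i) : S y m = S z m := by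
  unfold S
  congr 1
  apply Finset.filter_congr
  intro i hi
  rw [h i (Finset.mem_range.mp hi)]

lemma S_shift (y : ℕ → Bool) (k m : ℕ) : S (shift^[k] y) m + S y k = S y (k + m) := by
  induction m with
  | zero => simp [S_zero]
  | succ n ih =>
    rw [S_succ, ← Nat.add_assoc k n 1, S_succ, shift_iter_apply]
    have h2 : n + k = k + n := by omega
    rw [h2]
    omega

/-! ### Mechanical words -/

/-- The mechanical word with intercept `r`. -/
def M (p q r : ℕ) : ℕ → Bool := fun i => decide (q - p ≤ (r + i * p) % q)

lemma M_mod (p q r : ℕ) : M p q r = M p q (r % q) := by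
  funext i
  unfold M
  rw [Nat.mod_add_mod]

lemma M_periodic (p q r : ℕ) : ∀ i, M p q r (i + q) = M p q r i := by
  intro i
  unfold M
  have h : r + (i + q) * p = r + i * p + p * q := by ring
  rw [h, Nat.add_mul_mod_self_right]

lemma shift_M (p q r : ℕ) : shift (M p q r) = M p q (r + p) := by
  funext i
  show M p q r (i + 1) = M p q (r + p) i
  unfold M
  have h : r + (i + 1) * p = r + p + i * p := by ring
  rw [h]

lemma shift_iter_M (p q r k : ℕ) : shift^[k] (M p q r) = M p q (r + k * p) := by
  induction k generalizing r with
  | zero => simp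
  | succ n ih =>
    rw [Function.iterate_succ_apply, shift_M, ih (r + p)]
    congr 1
    ring

lemma mul_inv {p q : ℕ} (hq2 : 1 < q) (hcop : p.Coprime q) :
    ∃ e, e < q ∧ (p * e) % q = 1 := by
  obtain ⟨e, -, he⟩ := Nat.exists_mul_mod_eq_one_of_coprime hcop hq2
  refine ⟨e % q, Nat.mod_lt _ (by omega), ?_⟩
  have : p * (e % q) ≡ p * e [MOD q] := (Nat.mod_modEq e q).mul_left p
  unfold Nat.ModEq at this
  rw [this, he]

lemma exists_hit {p q : ℕ} (hq2 : 1 < q) (hcop : p.Coprime q) (r t : ℕ) (ht : t < q) :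
    ∃ m, m < q ∧ (r + m * p) % q = t := by
  obtain ⟨e, helt, he⟩ := mul_inv hq2 hcop
  have hq : 0 < q := by omega
  refine ⟨((t + (q - r % q)) * e) % q, Nat.mod_lt _ hq, ?_⟩
  have hmod := Nat.mod_modEq ((t + (q - r % q)) * e) q
  have hep : p * e ≡ 1 [MOD q] := by
    unfold Nat.ModEq
    rw [he, Nat.mod_eq_of_lt hq2]
  have hDM := Nat.div_add_mod r q
  have hrlt : r % q < q := Nat.mod_lt _ hq
  have key : r + (((t + (q - r % q)) * e) % q) * p ≡ t [MOD q] := by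
    calc r + (((t + (q - r % q)) * e) % q) * p
        ≡ r + ((t + (q - r % q)) * e) * p [MOD q] := Nat.ModEq.add_left _ (hmod.mul_right p)
      _ = r + (t + (q - r % q)) * (p * e) := by ring
      _ ≡ r + (t + (q - r % q)) * 1 [MOD q] := Nat.ModEq.add_left _ (Nat.ModEq.mul_left _ hep)
      _ = t + (q * (r / q) + q) := by omega
      _ ≡ t + 0 [MOD q] :=
          Nat.ModEq.add_left t ((Nat.modEq_zero_iff_dvd).mpr ⟨r / q + 1, by ring⟩)
      _ = t := by omega
  unfold Nat.ModEq at key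
  rwa [Nat.mod_eq_of_lt ht] at key

lemma mod_cancel {p q : ℕ} (hcop : p.Coprime q) {a b : ℕ} (h : (a * p) % q = (b * p) % q) :
    a % q = b % q :=
  Nat.ModEq.cancel_right_of_coprime (by simpa [Nat.coprime_comm] using hcop) h

lemma mod_cancel_add {p q : ℕ} (hcop : p.Coprime q) {r a b : ℕ}
    (h : (r + a * p) % q = (r + b * p) % q) : a % q = b % q :=
  mod_cancel hcop (Nat.ModEq.add_left_cancel' r h)

lemma M_count {p q : ℕ} (hp : 1 ≤ p) (hpq : p < q) (hcop : p.Coprime q) (r : ℕ) :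
    S (M p q r) q = p := by
  have hq2 : 1 < q := by omega
  have hq : 0 < q := by omega
  unfold S
  have hcard : ((Finset.range q).filter (fun i => M p q r i = true)).card
      = (Finset.Ico (q - p) q).card := by
    apply Finset.card_bij (fun i _ => (r + i * p) % q)
    · intro a ha
      simp only [Finset.mem_filter, Finset.mem_range, M, decide_eq_true_iff] at ha
      exact Finset.mem_Ico.mpr ⟨ha.2, Nat.mod_lt _ hq⟩
    · intro a₁ ha₁ a₂ ha₂ hab
      simp only [Finset.mem_filter, Finset.mem_range] at ha₁ ha₂
      have := mod_cancel_add hcop hab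
      rwa [Nat.mod_eq_of_lt ha₁.1, Nat.mod_eq_of_lt ha₂.1] at this
    · intro s hs
      rw [Finset.mem_Ico] at hs
      obtain ⟨m, hm, hms⟩ := exists_hit hq2 hcop r s hs.2
      refine ⟨m, ?_, hms⟩
      simp only [Finset.mem_filter, Finset.mem_range, M, decide_eq_true_iff]
      exact ⟨hm, by rw [hms]; exact hs.1⟩
  rw [hcard, Nat.card_Ico]
  omega

lemma M_mem_Wpq {p q : ℕ} (hp : 1 ≤ p) (hpq : p < q) (hcop : p.Coprime q) (r : ℕ) :
    M p q r ∈ Wpq p q :=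
  ⟨M_periodic p q r, M_count hp hpq hcop r⟩

/-! ### The prefix-sum formula for mechanical words -/

lemma div_jump {p q : ℕ} (hq : 0 < q) (hpq : p ≤ q) (a : ℕ) :
    (a + p) / q = a / q + (if q - p ≤ a % q then 1 else 0) := by
  have hDM := Nat.div_add_mod a q
  have hlt : a % q < q := Nat.mod_lt _ hq
  split_ifs with h
  · have hmul : q * (a / q + 1) = q * (a / q) + q := by ring
    have h1 : a + p = (a % q + p - q) + q * (a / q + 1) := by omega
    have hlt2 : a % q + p - q < q := by omega
    rw [h1, Nat.add_mul_div_left _ _ hq, Nat.div_eq_of_lt hlt2]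
    omega
  · have h1 : a + p = (a % q + p) + q * (a / q) := by omega
    have hlt2 : a % q + p < q := by omega
    rw [h1, Nat.add_mul_div_left _ _ hq, Nat.div_eq_of_lt hlt2]
    omega

lemma M_sum {p q : ℕ} (hq : 0 < q) (hpq : p ≤ q) {r : ℕ} (hr : r < q) (m : ℕ) :
    S (M p q r) m = (r + m * p) / q := by
  induction m with
  | zero => simp [S_zero, Nat.div_eq_of_lt hr]
  | succ n ih =>
    rw [S_succ, ih]
    have h1 : r + (n + 1) * p = (r + n * p) + p := by ring
    rw [h1, div_jump hq hpq]
    congr 1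
    simp [M, decide_eq_true_iff]

/-! ### Strict monotonicity of mechanical words in lex order -/

lemma M_ne {p q : ℕ} (hp : 1 ≤ p) (hpq : p < q) (hcop : p.Coprime q) {r₁ r₂ : ℕ}
    (h1 : r₁ < r₂) (h2 : r₂ < q) : M p q r₁ ≠ M p q r₂ := by
  intro heq
  have hq2 : 1 < q := by omega
  obtain ⟨m, hm, hm0⟩ := exists_hit hq2 hcop r₂ 0 (by omega)
  have hmne : m ≠ 0 := by
    intro h0
    rw [h0] at hm0
    simp only [Nat.zero_mul, Nat.add_zero] at hm0
    rw [Nat.mod_eq_of_lt h2] at hm0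
    omega
  have hS : S (M p q r₁) m = S (M p q r₂) m := by rw [heq]
  rw [M_sum (by omega) (by omega) (by omega : r₁ < q) m,
    M_sum (by omega) (by omega) h2 m] at hS
  -- r₂ + m * p = q * K exactly
  have hDM := Nat.div_add_mod (r₂ + m * p) q
  rw [hm0] at hDM
  set K := (r₂ + m * p) / q with hK
  have hK1 : 1 ≤ K := by
    rcases Nat.eq_zero_or_pos K with h0 | h0
    · rw [h0, Nat.mul_zero] at hDM
      omega
    · exact h0
  have hKq : q ≤ q * K := Nat.le_mul_of_pos_right q hK1
  have hKK : q * (K - 1) + q = q * K := by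
    rw [Nat.mul_sub, Nat.mul_one]
    omega
  have h3 : r₁ + m * p = (q - (r₂ - r₁)) + q * (K - 1) := by omega
  have hlt3 : q - (r₂ - r₁) < q := by omega
  rw [h3, Nat.add_mul_div_left _ _ (by omega : 0 < q), Nat.div_eq_of_lt hlt3] at hS
  omega

lemma M_lt_M {p q : ℕ} (hp : 1 ≤ p) (hpq : p < q) (hcop : p.Coprime q) {r₁ r₂ : ℕ}
    (h1 : r₁ < r₂) (h2 : r₂ < q) : toLex (M p q r₁) < toLex (M p q r₂) := by
  have hne : toLex (M p q r₁) ≠ toLex (M p q r₂) :=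
    fun h => M_ne hp hpq hcop h1 h2 (toLex.injective h)
  rcases lt_trichotomy (toLex (M p q r₁)) (toLex (M p q r₂)) with h | h | h
  · exact h
  · exact absurd h hne
  · exfalso
    obtain ⟨j, hbefore, hj⟩ := lex_lt_iff.mp h
    rw [Bool.lt_iff] at hj
    have hSagree : S (M p q r₂) j = S (M p q r₁) j := S_congr j (fun i hi => hbefore i hi)
    have hS1 : S (M p q r₁) (j + 1) = S (M p q r₁) j + 1 := by
      rw [S_succ, hj.2]
      simp
    have hS2 : S (M p q r₂) (j + 1) = S (M p q r₂) j := by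
      rw [S_succ, hj.1]
      simp
    have hq : 0 < q := by omega
    have hpq' : p ≤ q := by omega
    have hr1 : r₁ < q := by omega
    rw [M_sum hq hpq' hr1 (j + 1), M_sum hq hpq' hr1 j] at hS1
    rw [M_sum hq hpq' h2 (j + 1), M_sum hq hpq' h2 j] at hS2
    rw [M_sum hq hpq' h2 j, M_sum hq hpq' hr1 j] at hSagree
    have hmono : (r₁ + (j + 1) * p) / q ≤ (r₂ + (j + 1) * p) / q :=
      Nat.div_le_div_right (by omega)
    omega

lemma M_le_M {p q : ℕ} (hp : 1 ≤ p) (hpq : p < q) (hcop : p.Coprime q) {r₁ r₂ : ℕ}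
    (h1 : r₁ ≤ r₂) (h2 : r₂ < q) : toLex (M p q r₁) ≤ toLex (M p q r₂) := by
  rcases eq_or_lt_of_le h1 with h | h
  · rw [h]
  · exact le_of_lt (M_lt_M hp hpq hcop h h2)

/-! ### Shifts stay in Wpq, periodic sums -/

lemma S_period {p q : ℕ} {y : ℕ → Bool} (hper : ∀ i, y (i + q) = y i) (hcount : S y q = p) :
    ∀ k, S y (k + q) = S y k + p := by
  intro k
  induction k with
  | zero =>
    rw [Nat.zero_add, S_zero, Nat.zero_add]
    exact hcount
  | succ n ih =>
    have h1 : n + 1 + q = (n + q) + 1 := by omega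
    rw [h1, S_succ, S_succ, ih, hper n]
    omega

lemma shift_mem_Wpq {p q : ℕ} {y : ℕ → Bool} (hy : y ∈ Wpq p q) (k : ℕ) :
    shift^[k] y ∈ Wpq p q := by
  obtain ⟨hper, hcount⟩ := hy
  refine ⟨?_, ?_⟩
  · intro i
    rw [shift_iter_apply, shift_iter_apply]
    have h1 : i + q + k = (i + k) + q := by omega
    rw [h1, hper]
  · have h1 := S_shift y k q
    have h2 := S_period hper hcount k
    show S (shift^[k] y) q = p
    omega

lemma shift_q_eq {q : ℕ} {x : ℕ → Bool} (hx : ∀ i, x (i + q) = x i) : shift^[q] x = x := by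
  funext i
  rw [shift_iter_apply]
  exact hx i

/-! ### minShift of mechanical words -/

lemma minShift_M {p q : ℕ} (hp : 1 ≤ p) (hpq : p < q) (hcop : p.Coprime q) (r : ℕ) :
    minShift q (M p q r) = toLex (M p q 0) := by
  have hq : 0 < q := by omega
  have hq2 : 1 < q := by omega
  rw [minShift, dif_pos hq]
  apply le_antisymm
  · obtain ⟨m, hm, hm0⟩ := exists_hit hq2 hcop r 0 hq
    have hsm : shift^[m] (M p q r) = M p q 0 := by
      rw [shift_iter_M, M_mod, hm0]
    calc (Finset.range q).inf' (Finset.nonempty_range_iff.mpr hq.ne')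
          (fun k => toLex (shift^[k] (M p q r)))
        ≤ toLex (shift^[m] (M p q r)) :=
          Finset.inf'_le _ (Finset.mem_range.mpr hm)
      _ = toLex (M p q 0) := by rw [hsm]
  · apply Finset.le_inf'
    intro k _
    rw [shift_iter_M, M_mod p q (r + k * p)]
    exact M_le_M hp hpq hcop (Nat.zero_le _) (Nat.mod_lt _ hq)

/-! ### The cycle lemma: every element of Wpq has a shift below `M p q 0` -/

lemma exists_shift_le {p q : ℕ} (hp : 1 ≤ p) (hpq : p < q) (hcop : p.Coprime q)
    {y : ℕ → Bool} (hy : y ∈ Wpq p q) :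
    ∃ k < q, toLex (shift^[k] y) ≤ toLex (M p q 0) := by
  obtain ⟨hper, hcount⟩ := hy
  have hq : 0 < q := by omega
  have hq2 : 1 < q := by omega
  set f : ℕ → ℤ := fun k => (q : ℤ) * S y k - p * k with hf
  obtain ⟨k₀, hk₀mem, hk₀max⟩ := Finset.exists_max_image (Finset.range q) f
    ⟨0, Finset.mem_range.mpr hq⟩
  have hk₀ : k₀ < q := Finset.mem_range.mp hk₀mem
  have hSper : ∀ k, S y (k + q) = S y k + p := S_period hper hcount
  have hfper : ∀ k, f (k + q) = f k := by
    intro k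
    simp only [hf, hSper k]
    push_cast
    ring
  have hfred : ∀ n, f n = f (n % q) := by
    intro n
    induction n using Nat.strong_induction_on with
    | _ n ih =>
      rcases lt_or_ge n q with h | h
      · rw [Nat.mod_eq_of_lt h]
      · have e1 : n - q + q = n := by omega
        calc f n = f (n - q + q) := by rw [e1]
          _ = f (n - q) := hfper _
          _ = f ((n - q) % q) := ih _ (by omega)
          _ = f (n % q) := by rw [← Nat.mod_eq_sub_mod h]
  have hmax : ∀ m, f (k₀ + m) ≤ f k₀ := by
    intro m
    rw [hfred (k₀ + m)]
    exact hk₀max _ (Finset.mem_range.mpr (Nat.mod_lt _ hq))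
  have hstrict : ∀ m, 0 < m → m < q → f (k₀ + m) + 1 ≤ f k₀ := by
    intro m hm0 hmq
    have hne : f (k₀ + m) ≠ f k₀ := by
      intro he
      have hmono' : S y k₀ ≤ S y (k₀ + m) := S_mono y (by omega)
      have h1 : (q : ℤ) * (S y (k₀ + m)) - q * (S y k₀) = p * m := by
        simp only [hf] at he
        push_cast at he ⊢
        linarith
      have h2 : (q : ℤ) ∣ (p * m : ℤ) := ⟨(S y (k₀ + m) : ℤ) - (S y k₀ : ℤ), by linarith [h1, mul_sub (q:ℤ) ((S y (k₀+m)):ℤ) ((S y k₀):ℤ)]⟩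
      have h3 : q ∣ p * m := by exact_mod_cast h2
      have h4 : q ∣ m := Nat.Coprime.dvd_of_dvd_mul_left (Nat.coprime_comm.mp hcop) h3
      have := Nat.le_of_dvd hm0 h4
      omega
    have := hmax m
    omega
  refine ⟨k₀, hk₀, ?_⟩
  by_contra hcon
  push_neg at hcon
  set z := shift^[k₀] y with hz
  have hzper : ∀ i, z (i + q) = z i := by
    intro i
    simp only [hz, shift_iter_apply]
    have h1 : i + q + k₀ = (i + k₀) + q := by omega
    rw [h1, hper]
  obtain ⟨j, hbef, hj⟩ := lex_lt_iff.mp hcon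
  rw [Bool.lt_iff] at hj
  have hjq : j < q := by
    by_contra hge
    push_neg at hge
    have hagree : ∀ i < q, M p q 0 i = z i := fun i hi => hbef i (lt_of_lt_of_le hi hge)
    have heq := periodic_ext hq (M_periodic p q 0) hzper hagree
    rw [heq] at hj
    rw [hj.1] at hj
    exact Bool.false_ne_true hj.2
  rcases Nat.lt_or_ge (j + 1) q with hj1q | hj1q
  · -- main case: use the strict inequality
    have hSagree : S (M p q 0) j = S z j := S_congr j (fun i hi => hbef i hi)
    have hSz1 : S z (j + 1) = S z j + 1 := by
      rw [S_succ, hj.2]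
      simp
    have hMsum := M_sum hq (by omega : p ≤ q) hq j
    -- S (M p q 0) j = (0 + j*p)/q
    have hSzval : S z (j + 1) = (0 + j * p) / q + 1 := by
      rw [hSz1, ← hMsum, hSagree]
    have hF := hstrict (j + 1) (by omega) hj1q
    have hSzy : S z (j + 1) + S y k₀ = S y (k₀ + (j + 1)) := S_shift y k₀ (j + 1)
    simp only [hf] at hF
    rw [← hSzy] at hF
    have hDM := Nat.div_add_mod (0 + j * p) q
    have hsp : ¬ (q - p ≤ (0 + j * p) % q) := by
      have h9 := hj.1
      simp only [M, decide_eq_false_iff_not] at h9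
      exact h9
    have hexp : (q : ℤ) * ((S z (j+1) : ℤ) + (S y k₀ : ℤ)) = q * (S z (j+1)) + q * (S y k₀) := by
      ring
    have hG : (q : ℤ) * (S z (j + 1)) + 1 ≤ p * (j + 1) := by
      push_cast at hF
      push_cast at hexp
      linarith
    have hG' : q * S z (j + 1) + 1 ≤ p * (j + 1) := by exact_mod_cast hG
    rw [hSzval] at hG'
    have hprod : q * ((0 + j * p) / q + 1) = q * ((0 + j * p) / q) + q := by ring
    have hpj : p * (j + 1) = j * p + p := by ring
    omega
  · -- j = q - 1 : but M p q 0 (q-1) = true, contradiction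
    have hjeq : j = q - 1 := by omega
    have hmm : (0 + (q - 1) * p) % q = q - p := by
      have hc1 : q * p = p * q := Nat.mul_comm q p
      have hc2 : q ≤ q * p := Nat.le_mul_of_pos_right q hp
      have hc3 : (q - 1) * p = q * p - p := by
        rw [Nat.sub_mul, Nat.one_mul]
      have hc4 : (p - 1) * q = p * q - q := by
        rw [Nat.sub_mul, Nat.one_mul]
      have h1 : 0 + (q - 1) * p = (q - p) + (p - 1) * q := by omega
      rw [h1, Nat.add_mul_mod_self_right, Nat.mod_eq_of_lt (by omega)]
    have : M p q 0 j = true := by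
      rw [hjeq]
      simp only [M, decide_eq_true_iff, hmm]
      exact Nat.le_refl _
    rw [hj.1] at this
    exact Bool.false_ne_true this

/-! ### Maximin implies mechanical -/

lemma maximin_imp_exists_M {p q : ℕ} (hp : 1 ≤ p) (hpq : p < q) (hcop : p.Coprime q)
    {x : ℕ → Bool} (hx : x ∈ Wpq p q) (hmax : IsMaximin p q x) : ∃ r, x = M p q r := by
  have hq : 0 < q := by omega
  have h1 : minShift q x ≤ toLex (M p q 0) := by
    obtain ⟨k, hk, hle⟩ := exists_shift_le hp hpq hcop hx
    rw [minShift, dif_pos hq]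
    exact le_trans (Finset.inf'_le _ (Finset.mem_range.mpr hk)) hle
  have h2 : toLex (M p q 0) ≤ minShift q x := by
    have := hmax (M p q 0) (M_mem_Wpq hp hpq hcop 0)
    rwa [minShift_M hp hpq hcop 0] at this
  have heq : minShift q x = toLex (M p q 0) := le_antisymm h1 h2
  rw [minShift, dif_pos hq] at heq
  obtain ⟨k, hkmem, hinf⟩ := Finset.exists_mem_eq_inf'
    (Finset.nonempty_range_iff.mpr hq.ne') (fun k => toLex (shift^[k] x))
  have hk : k < q := Finset.mem_range.mp hkmem
  have hxk : shift^[k] x = M p q 0 := toLex.injective (by rw [← hinf, heq])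
  refine ⟨(q - k) * p, ?_⟩
  have hqx : shift^[q] x = x := shift_q_eq hx.1
  have h3 : shift^[q - k] (shift^[k] x) = x := by
    rw [← Function.iterate_add_apply, show q - k + k = q by omega, hqx]
  rw [hxk, shift_iter_M, Nat.zero_add] at h3
  exact h3.symm

/-! ### Mechanical words are p,q-ordered -/

lemma hit_mod {p q : ℕ} (hq : 0 < q) {e : ℕ} (hep : p * e ≡ 1 [MOD q]) (r t : ℕ) (ht : t < q) :
    (r + (((t + (q - r % q)) * e) % q) * p) % q = t := by
  have hmod := Nat.mod_modEq ((t + (q - r % q)) * e) q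
  have hDM := Nat.div_add_mod r q
  have hrlt : r % q < q := Nat.mod_lt _ hq
  have key : r + (((t + (q - r % q)) * e) % q) * p ≡ t [MOD q] := by
    calc r + (((t + (q - r % q)) * e) % q) * p
        ≡ r + ((t + (q - r % q)) * e) * p [MOD q] := Nat.ModEq.add_left _ (hmod.mul_right p)
      _ = r + (t + (q - r % q)) * (p * e) := by ring
      _ ≡ r + (t + (q - r % q)) * 1 [MOD q] := Nat.ModEq.add_left _ (Nat.ModEq.mul_left _ hep)
      _ = t + (q * (r / q) + q) := by omega
      _ ≡ t + 0 [MOD q] :=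
          Nat.ModEq.add_left t ((Nat.modEq_zero_iff_dvd).mpr ⟨r / q + 1, by ring⟩)
      _ = t := by omega
  unfold Nat.ModEq at key
  rwa [Nat.mod_eq_of_lt ht] at key

lemma M_isPQOrdered {p q : ℕ} (hp : 1 ≤ p) (hpq : p < q) (hcop : p.Coprime q) (r : ℕ) :
    IsPQOrdered q (M p q r) := by
  have hq : 0 < q := by omega
  have hq2 : 1 < q := by omega
  obtain ⟨e, helt, he⟩ := mul_inv hq2 hcop
  have hep : p * e ≡ 1 [MOD q] := by
    unfold Nat.ModEq
    rw [he, Nat.mod_eq_of_lt hq2]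
  constructor
  · -- distinct shifts
    intro k₁ hk₁ k₂ hk₂ heq
    rw [shift_iter_M, shift_iter_M, M_mod p q (r + k₁ * p), M_mod p q (r + k₂ * p)] at heq
    have hres : (r + k₁ * p) % q = (r + k₂ * p) % q := by
      by_contra hne
      rcases Nat.lt_or_ge ((r + k₁ * p) % q) ((r + k₂ * p) % q) with h | h
      · exact M_ne hp hpq hcop h (Nat.mod_lt _ hq) heq
      · exact M_ne hp hpq hcop (by omega) (Nat.mod_lt _ hq) heq.symm
    have := mod_cancel_add hcop hres
    rwa [Nat.mod_eq_of_lt hk₁, Nat.mod_eq_of_lt hk₂] at this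
  · -- the ordering bijection
    refine ⟨fun j => ⟨(((j : ℕ) + (q - r % q)) * e) % q, Nat.mod_lt _ hq⟩, e, ?_, ?_, ?_⟩
    · -- bijective
      rw [← Finite.injective_iff_bijective]
      intro j₁ j₂ hI
      have h₁ := hit_mod hq hep r (j₁ : ℕ) j₁.isLt
      have h₂ := hit_mod hq hep r (j₂ : ℕ) j₂.isLt
      have hval : (((j₁ : ℕ) + (q - r % q)) * e) % q = (((j₂ : ℕ) + (q - r % q)) * e) % q :=
        congrArg Fin.val hI
      apply Fin.ext
      rw [← h₁, ← h₂, hval]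
    · -- monotone
      intro j₁ j₂ hlt
      simp only []
      rw [shift_iter_M, shift_iter_M, M_mod p q (r + _ * p), M_mod p q (r + _ * p),
        hit_mod hq hep r (j₁ : ℕ) j₁.isLt, hit_mod hq hep r (j₂ : ℕ) j₂.isLt]
      exact M_lt_M hp hpq hcop hlt j₂.isLt
    · -- constant gap
      intro j hj
      simp only []
      rw [Nat.mod_eq_of_lt (Nat.mod_lt _ hq), Nat.mod_add_mod]
      have harg : ((j : ℕ) + 1 + (q - r % q)) * e = ((j : ℕ) + (q - r % q)) * e + e := by ring
      rw [harg]

/-! ### p,q-ordered implies mechanical -/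

lemma coprime_of_mul_mod {c en q : ℕ} (hq2 : 1 < q) (h : (en * c) % q = 1) :
    Nat.Coprime c q := by
  have hdm := Nat.div_add_mod (en * c) q
  rw [h] at hdm
  have d1 : Nat.gcd c q ∣ en * c := Dvd.dvd.mul_left (Nat.gcd_dvd_left c q) en
  have d2 : Nat.gcd c q ∣ q * (en * c / q) := Dvd.dvd.mul_right (Nat.gcd_dvd_right c q) _
  have d3 : Nat.gcd c q ∣ en * c - q * (en * c / q) := Nat.dvd_sub d1 d2
  rw [show en * c - q * (en * c / q) = 1 by omega] at d3
  exact Nat.eq_one_of_dvd_one d3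

lemma ordered_imp_exists_M {p q : ℕ} (hp : 1 ≤ p) (hpq : p < q) (hcop : p.Coprime q)
    {x : ℕ → Bool} (hx : x ∈ Wpq p q) (h : IsPQOrdered q x) : ∃ r, x = M p q r := by
  obtain ⟨hper, hcount⟩ := hx
  obtain ⟨hdist, I, c, hbij, hmono, hgap⟩ := h
  have hq : 0 < q := by omega
  have hq2 : 1 < q := by omega
  set i0 := (I ⟨0, hq⟩ : ℕ) with hi0
  -- Step 1: explicit formula for I
  have hIfor : ∀ n (hn : n < q), (I ⟨n, hn⟩ : ℕ) = (i0 + n * c) % q := by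
    intro n
    induction n with
    | zero =>
      intro hn
      rw [Nat.zero_mul, Nat.add_zero, Nat.mod_eq_of_lt (Fin.is_lt _)]
    | succ n ih =>
      intro hn
      have hn' : n < q := by omega
      have hg := hgap ⟨n, hn'⟩ hn
      rw [ih hn', Nat.mod_eq_of_lt (Fin.is_lt _), Nat.mod_add_mod] at hg
      rw [hg]
      congr 1
      ring
  have hIfor' : ∀ j : Fin q, (I j : ℕ) = (i0 + (j : ℕ) * c) % q := by
    intro j
    have := hIfor (j : ℕ) j.isLt
    rwa [Fin.eta] at this
  -- Step 2: count of true first-bits is p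
  have hcard : (Finset.univ.filter (fun j : Fin q => x ((I j : ℕ)) = true)).card = p := by
    rw [← hcount]
    apply Finset.card_bij (fun j _ => (I j : ℕ))
    · intro a ha
      simp only [Finset.mem_filter, Finset.mem_univ, true_and] at ha
      simp only [Finset.mem_filter, Finset.mem_range]
      exact ⟨Fin.is_lt _, ha⟩
    · intro a₁ _ a₂ _ hval
      exact hbij.1 (Fin.ext hval)
    · intro b hb
      simp only [Finset.mem_filter, Finset.mem_range] at hb
      obtain ⟨j, hj⟩ := hbij.2 ⟨b, hb.1⟩
      refine ⟨j, ?_, ?_⟩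
      · simp only [Finset.mem_filter, Finset.mem_univ, true_and]
        rw [hj]
        exact hb.2
      · rw [hj]
  -- Step 3: monotone first bits
  have hmonobit : ∀ j₁ j₂ : Fin q, j₁ < j₂ → x ((I j₁ : ℕ)) = true → x ((I j₂ : ℕ)) = true := by
    intro j₁ j₂ hlt h1
    obtain ⟨m, hbef, hm⟩ := lex_lt_iff.mp (hmono j₁ j₂ hlt)
    rcases Nat.eq_zero_or_pos m with h0 | h0
    · exfalso
      rw [h0, Bool.lt_iff] at hm
      rw [shift_iter_apply, Nat.zero_add, h1] at hm
      simp at hm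
    · have h2 := hbef 0 h0
      rw [shift_iter_apply, shift_iter_apply, Nat.zero_add, Nat.zero_add, h1] at h2
      exact h2.symm
  -- Step 4: threshold description of first bits
  have hthr : ∀ j : Fin q, x ((I j : ℕ)) = true ↔ q - p ≤ (j : ℕ) := by
    intro j
    constructor
    · intro ht
      by_contra hlt
      push_neg at hlt
      have hsub : Finset.Ici j ⊆ Finset.univ.filter (fun j' : Fin q => x ((I j' : ℕ)) = true) := by
        intro j' hj'
        simp only [Finset.mem_Ici] at hj'
        simp only [Finset.mem_filter, Finset.mem_univ, true_and]
        rcases eq_or_lt_of_le hj' with he | hlt2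
        · rw [← he]; exact ht
        · exact hmonobit j j' hlt2 ht
      have hle := Finset.card_le_card hsub
      rw [Fin.card_Ici, hcard] at hle
      omega
    · intro hge
      by_contra hfalse
      have hsub : Finset.Iic j ⊆ Finset.univ.filter (fun j' : Fin q => ¬ x ((I j' : ℕ)) = true) := by
        intro j' hj'
        simp only [Finset.mem_Iic] at hj'
        simp only [Finset.mem_filter, Finset.mem_univ, true_and]
        intro ht'
        rcases eq_or_lt_of_le hj' with he | hlt2
        · rw [he] at ht'
          exact hfalse ht'
        · exact hfalse (hmonobit j' j hlt2 ht')
      have hle := Finset.card_le_card hsub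
      rw [Fin.card_Iic] at hle
      have hcompl := Finset.card_filter_add_card_filter_not
        (s := (Finset.univ : Finset (Fin q))) (p := fun j' : Fin q => x ((I j' : ℕ)) = true)
      rw [hcard, Finset.card_univ, Fintype.card_fin] at hcompl
      omega
  -- Step 5: successor-rank map is monotone on constant-bit blocks
  set E := Equiv.ofBijective I hbij with hE
  have hEsym : ∀ a : Fin q, I (E.symm a) = a := fun a => E.apply_symm_apply a
  have hC : ∀ j₁ j₂ t₁ t₂ : Fin q, j₁ < j₂ → x ((I j₁ : ℕ)) = x ((I j₂ : ℕ)) →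
      (I t₁ : ℕ) = ((I j₁ : ℕ) + 1) % q → (I t₂ : ℕ) = ((I j₂ : ℕ) + 1) % q → t₁ < t₂ := by
    intro j₁ j₂ t₁ t₂ hlt hbit ht₁ ht₂
    have htail : toLex (shift^[(I t₁ : ℕ)] x) < toLex (shift^[(I t₂ : ℕ)] x) := by
      have e₁ : shift^[(I t₁ : ℕ)] x = shift^[(I j₁ : ℕ) + 1] x := by
        rw [ht₁]
        exact (shift_iter_mod hq hper _).symm
      have e₂ : shift^[(I t₂ : ℕ)] x = shift^[(I j₂ : ℕ) + 1] x := by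
        rw [ht₂]
        exact (shift_iter_mod hq hper _).symm
      rw [e₁, e₂]
      obtain ⟨m, hbef, hm⟩ := lex_lt_iff.mp (hmono j₁ j₂ hlt)
      have hm0 : m ≠ 0 := by
        intro h0
        rw [h0] at hm
        rw [shift_iter_apply, shift_iter_apply, Nat.zero_add, Nat.zero_add, hbit] at hm
        exact lt_irrefl _ hm
      obtain ⟨m', rfl⟩ : ∃ m', m = m' + 1 := ⟨m - 1, by omega⟩
      refine lex_lt_iff.mpr ⟨m', ?_, ?_⟩
      · intro n hn
        have h2 := hbef (n + 1) (by omega)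
        rw [shift_iter_apply, shift_iter_apply] at h2
        rw [shift_iter_apply, shift_iter_apply,
          show n + ((I j₁ : ℕ) + 1) = n + 1 + (I j₁ : ℕ) by omega,
          show n + ((I j₂ : ℕ) + 1) = n + 1 + (I j₂ : ℕ) by omega]
        exact h2
      · rw [shift_iter_apply, shift_iter_apply] at hm
        rw [shift_iter_apply, shift_iter_apply,
          show m' + ((I j₁ : ℕ) + 1) = m' + 1 + (I j₁ : ℕ) by omega,
          show m' + ((I j₂ : ℕ) + 1) = m' + 1 + (I j₂ : ℕ) by omega]
        exact hm
    rcases lt_trichotomy t₁ t₂ with h' | h' | h'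
    · exact h'
    · exfalso
      rw [h'] at htail
      exact lt_irrefl _ htail
    · exfalso
      exact lt_asymm (hmono _ _ h') htail
  -- Step 6: modular relation for the successor ranks
  have hTmod : ∀ j t : Fin q, (I t : ℕ) = ((I j : ℕ) + 1) % q →
      (t : ℕ) * c ≡ (j : ℕ) * c + 1 [MOD q] := by
    intro j t ht
    rw [hIfor' t, hIfor' j, Nat.mod_add_mod] at ht
    have ht' : i0 + (t : ℕ) * c ≡ i0 + ((j : ℕ) * c + 1) [MOD q] := by
      unfold Nat.ModEq
      rw [← Nat.add_assoc]
      exact ht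
    exact Nat.ModEq.add_left_cancel' i0 ht'
  have hnext : ∀ j : Fin q, ∃ t : Fin q, (I t : ℕ) = ((I j : ℕ) + 1) % q := by
    intro j
    exact ⟨E.symm ⟨((I j : ℕ) + 1) % q, Nat.mod_lt _ hq⟩, congrArg Fin.val (hEsym _)⟩
  obtain ⟨t₀, ht₀⟩ := hnext ⟨0, hq⟩
  set en := (t₀ : ℕ) with hen_def
  have hen : en * c ≡ 1 [MOD q] := by
    have h9 := hTmod ⟨0, hq⟩ t₀ ht₀
    simpa using h9
  have hen' : (en * c) % q = 1 := by
    have h9 := hen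
    unfold Nat.ModEq at h9
    rwa [Nat.mod_eq_of_lt hq2] at h9
  have hccop : Nat.Coprime c q := coprime_of_mul_mod hq2 hen'
  have hT : ∀ j t : Fin q, (I t : ℕ) = ((I j : ℕ) + 1) % q →
      (t : ℕ) = ((j : ℕ) + en) % q := by
    intro j t ht
    have h1 := hTmod j t ht
    have h3 : (t : ℕ) * c ≡ ((j : ℕ) + en) * c [MOD q] := by
      calc (t : ℕ) * c ≡ (j : ℕ) * c + 1 [MOD q] := h1
        _ ≡ (j : ℕ) * c + en * c [MOD q] := Nat.ModEq.add_left _ hen.symm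
        _ = ((j : ℕ) + en) * c := by ring
    have h5 := mod_cancel hccop h3
    rwa [Nat.mod_eq_of_lt t.isLt] at h5
  have hen_lt : en < q := t₀.isLt
  have hen_pos : 0 < en := by
    rcases Nat.eq_zero_or_pos en with h0 | h0
    · rw [h0, Nat.zero_mul, Nat.zero_mod] at hen'
      omega
    · exact h0
  -- Step 7: the wrap argument forces en = p
  have hen_eq : en = p := by
    by_contra hne
    rcases Nat.lt_or_ge en p with hlt | hge
    · -- en < p : two adjacent true-bit ranks wrap around
      have hb1 : q - en - 1 < q := by omega
      have hb2 : q - en < q := by omega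
      obtain ⟨t₁, ht₁⟩ := hnext ⟨q - en - 1, hb1⟩
      obtain ⟨t₂, ht₂⟩ := hnext ⟨q - en, hb2⟩
      have hx1 : x ((I ⟨q - en - 1, hb1⟩ : ℕ)) = true :=
        (hthr _).mpr (by show q - p ≤ q - en - 1; omega)
      have hx2 : x ((I ⟨q - en, hb2⟩ : ℕ)) = true :=
        (hthr _).mpr (by show q - p ≤ q - en; omega)
      have hCC := hC _ _ t₁ t₂ (by rw [Fin.mk_lt_mk]; omega) (by rw [hx1, hx2]) ht₁ ht₂
      have hv1 : (t₁ : ℕ) = q - 1 := by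
        rw [hT _ t₁ ht₁]
        show (q - en - 1 + en) % q = q - 1
        rw [show q - en - 1 + en = q - 1 by omega, Nat.mod_eq_of_lt (by omega)]
      have hv2 : (t₂ : ℕ) = 0 := by
        rw [hT _ t₂ ht₂]
        show (q - en + en) % q = 0
        rw [show q - en + en = q by omega, Nat.mod_self]
      rw [Fin.lt_def, hv1, hv2] at hCC
      omega
    · -- en > p : two adjacent false-bit ranks wrap around
      have hgt : p < en := by omega
      have hb1 : q - en - 1 < q := by omega
      have hb2 : q - en < q := by omega
      obtain ⟨t₁, ht₁⟩ := hnext ⟨q - en - 1, hb1⟩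
      obtain ⟨t₂, ht₂⟩ := hnext ⟨q - en, hb2⟩
      have hx1 : x ((I ⟨q - en - 1, hb1⟩ : ℕ)) = false := by
        rcases Bool.eq_false_or_eq_true (x ((I ⟨q - en - 1, hb1⟩ : ℕ))) with ht | hf
        · exfalso
          have h9 := (hthr _).mp ht
          revert h9
          show ¬ (q - p ≤ q - en - 1)
          omega
        · exact hf
      have hx2 : x ((I ⟨q - en, hb2⟩ : ℕ)) = false := by
        rcases Bool.eq_false_or_eq_true (x ((I ⟨q - en, hb2⟩ : ℕ))) with ht | hf
        · exfalso
          have h9 := (hthr _).mp ht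
          revert h9
          show ¬ (q - p ≤ q - en)
          omega
        · exact hf
      have hCC := hC _ _ t₁ t₂ (by rw [Fin.mk_lt_mk]; omega) (by rw [hx1, hx2]) ht₁ ht₂
      have hv1 : (t₁ : ℕ) = q - 1 := by
        rw [hT _ t₁ ht₁]
        show (q - en - 1 + en) % q = q - 1
        rw [show q - en - 1 + en = q - 1 by omega, Nat.mod_eq_of_lt (by omega)]
      have hv2 : (t₂ : ℕ) = 0 := by
        rw [hT _ t₂ ht₂]
        show (q - en + en) % q = 0
        rw [show q - en + en = q by omega, Nat.mod_self]
      rw [Fin.lt_def, hv1, hv2] at hCC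
      omega
  -- Step 8: conclude that x is the mechanical word with intercept r₀
  have hpc : p * c ≡ 1 [MOD q] := by
    rw [← hen_eq]
    exact hen
  set r₀ := (q - (i0 * p) % q) % q with hr₀
  have hrank : ∀ k (hk : k < q), (r₀ + k * p) % q = ((E.symm ⟨k, hk⟩ : Fin q) : ℕ) := by
    intro k hk
    have hIj : (I (E.symm ⟨k, hk⟩) : ℕ) = k := congrArg Fin.val (hEsym ⟨k, hk⟩)
    have hform := hIfor' (E.symm ⟨k, hk⟩)
    rw [hIj] at hform
    have hkmod : k ≡ i0 + ((E.symm ⟨k, hk⟩ : Fin q) : ℕ) * c [MOD q] := by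
      show k % q = (i0 + ((E.symm ⟨k, hk⟩ : Fin q) : ℕ) * c) % q
      rw [Nat.mod_eq_of_lt hk]
      exact hform
    have h1 : k * p ≡ i0 * p + ((E.symm ⟨k, hk⟩ : Fin q) : ℕ) [MOD q] := by
      calc k * p ≡ (i0 + ((E.symm ⟨k, hk⟩ : Fin q) : ℕ) * c) * p [MOD q] := hkmod.mul_right p
        _ = i0 * p + ((E.symm ⟨k, hk⟩ : Fin q) : ℕ) * (c * p) := by ring
        _ ≡ i0 * p + ((E.symm ⟨k, hk⟩ : Fin q) : ℕ) * 1 [MOD q] :=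
            Nat.ModEq.add_left _ (Nat.ModEq.mul_left _ (by rwa [Nat.mul_comm] at hpc))
        _ = i0 * p + ((E.symm ⟨k, hk⟩ : Fin q) : ℕ) := by ring
    have hdm := Nat.div_add_mod (i0 * p) q
    have hltm : (i0 * p) % q < q := Nat.mod_lt _ hq
    have h2 : r₀ + i0 * p ≡ 0 [MOD q] := by
      calc r₀ + i0 * p ≡ (q - (i0 * p) % q) + i0 * p [MOD q] := (Nat.mod_modEq _ q).add_right _
        _ = q * (i0 * p / q) + q := by omega
        _ ≡ 0 [MOD q] := (Nat.modEq_zero_iff_dvd).mpr ⟨i0 * p / q + 1, by ring⟩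
    have h3 : r₀ + k * p ≡ ((E.symm ⟨k, hk⟩ : Fin q) : ℕ) [MOD q] := by
      calc r₀ + k * p ≡ r₀ + (i0 * p + ((E.symm ⟨k, hk⟩ : Fin q) : ℕ)) [MOD q] :=
            Nat.ModEq.add_left _ h1
        _ = (r₀ + i0 * p) + ((E.symm ⟨k, hk⟩ : Fin q) : ℕ) := by ring
        _ ≡ 0 + ((E.symm ⟨k, hk⟩ : Fin q) : ℕ) [MOD q] := h2.add_right _
        _ = ((E.symm ⟨k, hk⟩ : Fin q) : ℕ) := by ring
    unfold Nat.ModEq at h3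
    rwa [Nat.mod_eq_of_lt (Fin.is_lt _)] at h3
  refine ⟨r₀, periodic_ext hq hper (M_periodic p q r₀) ?_⟩
  intro k hk
  have hj := hrank k hk
  have hIj : (I (E.symm ⟨k, hk⟩) : ℕ) = k := congrArg Fin.val (hEsym ⟨k, hk⟩)
  have hbit := hthr (E.symm ⟨k, hk⟩)
  rw [hIj] at hbit
  show x k = decide (q - p ≤ (r₀ + k * p) % q)
  rw [hj]
  rcases le_or_gt (q - p) ((E.symm ⟨k, hk⟩ : Fin q) : ℕ) with hle | hltb
  · rw [hbit.mpr hle, decide_eq_true hle]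
  · have hxf : x k = false := by
      rcases Bool.eq_false_or_eq_true (x k) with ht | hf
      · exact absurd (hbit.mp ht) (by omega)
      · exact hf
    rw [hxf, decide_eq_false (by omega)]

end MK

/-- A sequence `x ∈ W_{p,q}` with `1 ≤ p < q` coprime is maximin iff it is `p,q`-ordered. -/
theorem maximin_iff_pq_ordered (p q : ℕ) (hp : 1 ≤ p) (hpq : p < q)
    (hcop : Nat.Coprime p q) (x : ℕ → Bool) (hx : x ∈ Wpq p q) :
    IsMaximin p q x ↔ IsPQOrdered q x := by
  constructor
  · intro hmax
    obtain ⟨r, rfl⟩ := MK.maximin_imp_exists_M hp hpq hcop hx hmax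
    exact MK.M_isPQOrdered hp hpq hcop r
  · intro hord
    obtain ⟨r, rfl⟩ := MK.ordered_imp_exists_M hp hpq hcop hx hord
    intro y hy
    rw [MK.minShift_M hp hpq hcop r]
    obtain ⟨k, hk, hle⟩ := MK.exists_shift_le hp hpq hcop hy
    rw [minShift, dif_pos (by omega : 0 < q)]
    exact le_trans (Finset.inf'_le _ (Finset.mem_range.mpr hk)) hle
end

section
/- Let τ_θ > 1, let θ_∞ : ℝ → ℝ be Lipschitz with constant L ≥ 0, let A ∈ ℝ, and let (V₁, θ₁) and (V₂, θ₂) be two solutions on [0,∞) of the system V' = −V + V₀ + A, τ_θ θ' = −θ + θ_∞(V). Then for all t ≥ 0: |V₁(t) − V₂(t)| = e^{−t}·|V₁(0) − V₂(0)| and |θ₁(t) − θ₂(t)| ≤ e^{−t/τ_θ}·( |θ₁(0) − θ₂(0)| + (L/(τ_θ − 1))·|V₁(0) − V₂(0)| ). -/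
open Real
open Set

/-- Contraction estimates for the threshold model with constant input `A`:
if `τ_θ > 1` and `θ_∞` is `L`-Lipschitz, then any two solutions `(V₁,θ₁)`, `(V₂,θ₂)` of
`V' = −V + V₀ + A`, `τ_θ θ' = −θ + θ_∞(V)` on `[0,∞)` satisfy, for all `t ≥ 0`,
`|V₁(t) − V₂(t)| = e^{−t}|V₁(0) − V₂(0)|` and
`|θ₁(t) − θ₂(t)| ≤ e^{−t/τ_θ}(|θ₁(0) − θ₂(0)| + (L/(τ_θ−1))|V₁(0) − V₂(0)|)`. -/
theorem threshold_model_contraction (τ V₀ A L : ℝ) (hτ : 1 < τ) (hL : 0 ≤ L)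
    (θinf : ℝ → ℝ) (hLip : ∀ a b : ℝ, |θinf a - θinf b| ≤ L * |a - b|)
    (V₁ θ₁ V₂ θ₂ : ℝ → ℝ)
    (hV₁ : ∀ t : ℝ, 0 ≤ t → HasDerivAt V₁ (-V₁ t + V₀ + A) t)
    (hθ₁ : ∀ t : ℝ, 0 ≤ t → HasDerivAt θ₁ ((-θ₁ t + θinf (V₁ t)) / τ) t)
    (hV₂ : ∀ t : ℝ, 0 ≤ t → HasDerivAt V₂ (-V₂ t + V₀ + A) t)
    (hθ₂ : ∀ t : ℝ, 0 ≤ t → HasDerivAt θ₂ ((-θ₂ t + θinf (V₂ t)) / τ) t) :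
    ∀ t : ℝ, 0 ≤ t →
      |V₁ t - V₂ t| = exp (-t) * |V₁ 0 - V₂ 0| ∧
      |θ₁ t - θ₂ t| ≤ exp (-t / τ) * (|θ₁ 0 - θ₂ 0| + L / (τ - 1) * |V₁ 0 - V₂ 0|) := by
  have hτ0 : (0:ℝ) < τ := lt_trans one_pos hτ
  have hτ1 : τ - 1 ≠ 0 := by linarith
  have hτne : τ ≠ 0 := ne_of_gt hτ0
  -- Part 1 : V difference
  have hWderiv : ∀ t : ℝ, 0 ≤ t →
      HasDerivAt (fun s => exp s * (V₁ s - V₂ s)) 0 t := by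
    intro t ht
    have h1 := (hV₁ t ht).fun_sub (hV₂ t ht)
    have h2 := (Real.hasDerivAt_exp t).fun_mul h1
    refine h2.congr_deriv ?_
    ring
  have key : ∀ t : ℝ, 0 ≤ t → V₁ t - V₂ t = exp (-t) * (V₁ 0 - V₂ 0) := by
    intro t ht
    have hcont : ContinuousOn (fun s => exp s * (V₁ s - V₂ s)) (Icc 0 t) :=
      fun x hx => ((hWderiv x hx.1).continuousAt).continuousWithinAt
    have := constant_of_has_deriv_right_zero hcont
      (fun x hx => ((hWderiv x hx.1).hasDerivWithinAt)) t (right_mem_Icc.mpr ht)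
    simp only [exp_zero, one_mul] at this
    have hexp : exp t ≠ 0 := exp_ne_zero t
    rw [exp_neg]
    field_simp at this ⊢
    linarith [this]
  have part1 : ∀ t : ℝ, 0 ≤ t → |V₁ t - V₂ t| = exp (-t) * |V₁ 0 - V₂ 0| := by
    intro t ht
    rw [key t ht, abs_mul, abs_of_pos (exp_pos _)]
  intro T hT
  refine ⟨part1 T hT, ?_⟩
  -- Part 2 : θ difference
  set C := L * |V₁ 0 - V₂ 0| with hC
  have hC0 : 0 ≤ C := mul_nonneg hL (abs_nonneg _)
  set g : ℝ → ℝ := fun s => exp (s / τ) * (θ₁ s - θ₂ s) with hg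
  set h : ℝ → ℝ := fun s => -(C / (τ - 1)) * exp ((1 / τ - 1) * s) with hh
  have hgd : ∀ t : ℝ, 0 ≤ t →
      HasDerivAt g (exp (t / τ) * (θinf (V₁ t) - θinf (V₂ t)) / τ) t := by
    intro t ht
    have he : HasDerivAt (fun s : ℝ => exp (s / τ)) (exp (t / τ) * (1 / τ)) t := by
      have := ((hasDerivAt_id t).div_const τ).exp
      simpa [div_eq_mul_inv, mul_comm] using this
    have hΦ := (hθ₁ t ht).fun_sub (hθ₂ t ht)
    have := he.fun_mul hΦ
    refine this.congr_deriv ?_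
    field_simp
    ring
  have hhd : ∀ t : ℝ,
      HasDerivAt h ((C / τ) * exp ((1 / τ - 1) * t)) t := by
    intro t
    have : HasDerivAt (fun s : ℝ => exp ((1 / τ - 1) * s)) ((1 / τ - 1) * exp ((1 / τ - 1) * t)) t := by
      have := ((hasDerivAt_id t).const_mul (1 / τ - 1)).exp
      simpa [mul_comm] using this
    have h2 := this.const_mul (-(C / (τ - 1)))
    refine h2.congr_deriv ?_
    field_simp
    ring
  have hbound : ∀ t : ℝ, 0 ≤ t →
      |exp (t / τ) * (θinf (V₁ t) - θinf (V₂ t)) / τ| ≤ (C / τ) * exp ((1 / τ - 1) * t) := by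
    intro t ht
    have h1 : |θinf (V₁ t) - θinf (V₂ t)| ≤ L * (exp (-t) * |V₁ 0 - V₂ 0|) := by
      have := hLip (V₁ t) (V₂ t)
      rwa [part1 t ht] at this
    have hτpos : (0:ℝ) < τ := hτ0
    rw [abs_div, abs_mul, abs_of_pos (exp_pos _), abs_of_pos hτpos]
    rw [div_le_iff₀ hτpos]
    calc exp (t / τ) * |θinf (V₁ t) - θinf (V₂ t)|
        ≤ exp (t / τ) * (L * (exp (-t) * |V₁ 0 - V₂ 0|)) := by
          exact mul_le_mul_of_nonneg_left h1 (le_of_lt (exp_pos _))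
      _ = C / τ * exp ((1 / τ - 1) * t) * τ := by
          have he : (1 / τ - 1) * t = t / τ + -t := by field_simp; ring
          rw [hC, he, exp_add]
          field_simp
  -- monotonicity of h - g and h + g on [0, T]
  have mono : ∀ (F : ℝ → ℝ) (F' : ℝ → ℝ),
      (∀ t : ℝ, 0 ≤ t → HasDerivAt F (F' t) t) → (∀ t : ℝ, 0 ≤ t → 0 ≤ F' t) →
      F 0 ≤ F T := by
    intro F F' hFd hF0
    have hmono : MonotoneOn F (Icc 0 T) := by
      apply monotoneOn_of_deriv_nonneg (convex_Icc 0 T)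
      · exact fun x hx => ((hFd x hx.1).continuousAt).continuousWithinAt
      · intro x hx
        rw [interior_Icc] at hx
        exact ((hFd x (le_of_lt hx.1)).differentiableAt).differentiableWithinAt
      · intro x hx
        rw [interior_Icc] at hx
        rw [(hFd x (le_of_lt hx.1)).deriv]
        exact hF0 x (le_of_lt hx.1)
    exact hmono (left_mem_Icc.mpr hT) (right_mem_Icc.mpr hT) hT
  have h1 : h 0 - g 0 ≤ h T - g T := by
    apply mono (fun s => h s - g s)
      (fun s => (C / τ) * exp ((1 / τ - 1) * s) - exp (s / τ) * (θinf (V₁ s) - θinf (V₂ s)) / τ)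
    · intro t ht; exact (hhd t).sub (hgd t ht)
    · intro t ht
      have := hbound t ht
      have := abs_le.mp this
      linarith [this.2]
  have h2 : h 0 + g 0 ≤ h T + g T := by
    apply mono (fun s => h s + g s)
      (fun s => (C / τ) * exp ((1 / τ - 1) * s) + exp (s / τ) * (θinf (V₁ s) - θinf (V₂ s)) / τ)
    · intro t ht; exact (hhd t).add (hgd t ht)
    · intro t ht
      have := abs_le.mp (hbound t ht)
      linarith [this.1]
  have hgabs : |g T - g 0| ≤ h T - h 0 := by
    rw [abs_sub_le_iff]
    constructor <;> linarith
  have hhb : h T - h 0 ≤ C / (τ - 1) := by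
    simp only [hh]
    have he : 0 ≤ exp ((1 / τ - 1) * T) := le_of_lt (exp_pos _)
    have hCτ : 0 ≤ C / (τ - 1) := div_nonneg hC0 (by linarith)
    have : exp ((1 / τ - 1) * 0) = 1 := by simp
    rw [this]
    nlinarith
  have hgT : |g T| ≤ |θ₁ 0 - θ₂ 0| + C / (τ - 1) := by
    have hg0 : g 0 = θ₁ 0 - θ₂ 0 := by simp [hg]
    have h3 := abs_add_le (g 0) (g T - g 0)
    have h4 : g 0 + (g T - g 0) = g T := by ring
    rw [h4] at h3
    have habs0 : |g 0| = |θ₁ 0 - θ₂ 0| := by rw [hg0]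
    linarith
  have hgTeq : |g T| = exp (T / τ) * |θ₁ T - θ₂ T| := by
    rw [hg]; simp only
    rw [abs_mul, abs_of_pos (exp_pos _)]
  have hexp : 0 < exp (T / τ) := exp_pos _
  rw [neg_div, exp_neg]
  calc |θ₁ T - θ₂ T| = (exp (T / τ))⁻¹ * |g T| := by
        rw [hgTeq]; field_simp
    _ ≤ (exp (T / τ))⁻¹ * (|θ₁ 0 - θ₂ 0| + C / (τ - 1)) := by
        apply mul_le_mul_of_nonneg_left hgT (le_of_lt (inv_pos.mpr hexp))
    _ = (exp (T / τ))⁻¹ * (|θ₁ 0 - θ₂ 0| + L / (τ - 1) * |V₁ 0 - V₂ 0|) := by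
        rw [hC]; ring_nf
end

section
/- Let τ_θ > 0, let θ_∞ : ℝ → ℝ be continuous, and let V_r ≤ V₀. Assume that θ_∞(V) − V + τ_θ(V − V₀) > 0 for every V ≥ V_r (this condition says that on the threshold line V = θ the unforced vector field points strictly into the subthreshold region, so in particular no trajectory can graze the threshold). Then every solution (V, θ) on [0,∞) of the unforced system V' = −V + V₀, τ_θ θ' = −θ + θ_∞(V) with V(0) ≥ V_r and V(0) < θ(0) remains subthreshold for all time: V_r ≤ V(t) < θ(t) for all t ≥ 0. -/
open Real

/-- If on the threshold line `V = θ` the unforced vector field points strictly into the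
subthreshold region (i.e. `θ_∞(V) − V + τ_θ(V − V₀) > 0` for all `V ≥ V_r`), then every
solution of the unforced system `V' = −V + V₀`, `τ_θ θ' = −θ + θ_∞(V)` starting in the
subthreshold domain `{V_r ≤ V, V < θ}` remains subthreshold for all `t ≥ 0`. -/
theorem unforced_threshold_model_subthreshold_invariance (τ V₀ Vr : ℝ) (hτ : 0 < τ)
    (θinf : ℝ → ℝ) (hcont : Continuous θinf) (hVr : Vr ≤ V₀)
    (hfield : ∀ V : ℝ, Vr ≤ V → 0 < θinf V - V + τ * (V - V₀))
    (V θ : ℝ → ℝ)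
    (hV : ∀ t : ℝ, 0 ≤ t → HasDerivAt V (-V t + V₀) t)
    (hθ : ∀ t : ℝ, 0 ≤ t → HasDerivAt θ ((-θ t + θinf (V t)) / τ) t)
    (h0 : Vr ≤ V 0) (h0' : V 0 < θ 0) :
    ∀ t : ℝ, 0 ≤ t → Vr ≤ V t ∧ V t < θ t := by
  -- Part 1: explicit control of V via the integrating factor e^t (V - V₀)
  have key : ∀ t : ℝ, 0 ≤ t → Real.exp t * (V t - V₀) = V 0 - V₀ := by
    intro t ht
    have hconst := constant_of_has_deriv_right_zero
      (f := fun u => Real.exp u * (V u - V₀)) (a := 0) (b := t)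
      (fun x hx => ((Real.hasDerivAt_exp x).mul ((hV x hx.1).sub_const V₀)).continuousAt.continuousWithinAt)
      (fun x hx => by
        have h : HasDerivAt (fun u => Real.exp u * (V u - V₀)) _ x := (Real.hasDerivAt_exp x).mul ((hV x hx.1).sub_const V₀)
        have h0 : HasDerivAt (fun u => Real.exp u * (V u - V₀)) 0 x := by
          convert h using 1; ring
        exact h0.hasDerivWithinAt)
      t (Set.right_mem_Icc.mpr ht)
    simpa using hconst
  have hVrle : ∀ t : ℝ, 0 ≤ t → Vr ≤ V t := by
    intro t ht
    have h := key t ht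
    nlinarith [Real.exp_pos t, Real.one_le_exp ht]
  intro t ht
  refine ⟨hVrle t ht, ?_⟩
  by_contra hle
  push_neg at hle
  -- first crossing time
  set f : ℝ → ℝ := fun u => θ u - V u with hfdef
  have hf : ∀ u : ℝ, 0 ≤ u → HasDerivAt f ((-θ u + θinf (V u)) / τ - (-V u + V₀)) u :=
    fun u hu => (hθ u hu).sub (hV u hu)
  set S : Set ℝ := {u | 0 ≤ u ∧ θ u ≤ V u} with hSdef
  have hne : S.Nonempty := ⟨t, ht, hle⟩
  have hbdd : BddBelow S := ⟨0, fun u hu => hu.1⟩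
  set s := sInf S with hsdef
  have hs0 : 0 ≤ s := le_csInf hne (fun u hu => hu.1)
  have hcs : ContinuousAt f s := (hf s hs0).continuousAt
  have hfs : θ s ≤ V s := by
    by_contra h
    push_neg at h
    have hfspos : 0 < f s := sub_pos.mpr h
    obtain ⟨δ, hδ, hball⟩ := Metric.continuousAt_iff.mp hcs (f s) hfspos
    have hlb : s + δ / 2 ≤ sInf S := by
      apply le_csInf hne
      intro u hu
      by_contra hu2
      push_neg at hu2
      have hus : s ≤ u := csInf_le hbdd hu
      have : dist u s < δ := by
        rw [Real.dist_eq, abs_of_nonneg (by linarith)]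
        linarith
      have := hball this
      rw [Real.dist_eq] at this
      have : 0 < f u := by
        cases abs_lt.mp this with
        | intro h1 h2 => linarith
      have : θ u ≤ V u := hu.2
      simp only [hfdef] at *
      linarith
    linarith [hlb.trans_eq hsdef.symm]
  have hspos : 0 < s := by
    rcases lt_or_eq_of_le hs0 with h | h
    · exact h
    · exfalso; rw [← h] at hfs; linarith
  have hleft : ∀ u : ℝ, 0 ≤ u → u < s → 0 < f u := by
    intro u hu hus
    by_contra h
    push_neg at h
    have : s ≤ u := csInf_le hbdd ⟨hu, by simpa [hfdef] using h⟩
    linarith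
  -- f s = 0
  have hfs0 : f s = 0 := by
    have hge : 0 ≤ f s := by
      have htd : Filter.Tendsto f (nhdsWithin s (Set.Iio s)) (nhds (f s)) :=
        hcs.continuousWithinAt
      refine ge_of_tendsto htd ?_
      filter_upwards [Ioo_mem_nhdsLT_of_mem (Set.mem_Ioc.mpr ⟨hspos, le_refl s⟩)] with u hu
      exact (hleft u hu.1.le hu.2).le
    have : f s ≤ 0 := by simp [hfdef]; linarith
    linarith
  have hVθs : θ s = V s := by
    have := hfs0; simp only [hfdef] at this; linarith
  -- derivative at s is positive
  set d := (-θ s + θinf (V s)) / τ - (-V s + V₀) with hddef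
  have hd : 0 < d := by
    have hfield' := hfield (V s) (hVrle s hs0)
    have : d = (θinf (V s) - V s + τ * (V s - V₀)) / τ := by
      rw [hddef, hVθs]; field_simp; ring
    rw [this]
    exact div_pos hfield' hτ
  -- but the slope from the left is ≤ 0
  have hslope : Filter.Tendsto (slope f s) (nhdsWithin s {s}ᶜ) (nhds d) :=
    hasDerivAt_iff_tendsto_slope.mp (hf s hs0)
  have h1 : Filter.Tendsto (slope f s) (nhdsWithin s (Set.Iio s)) (nhds d) :=
    hslope.mono_left (nhdsWithin_mono s (fun x hx => ne_of_lt hx))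
  have h2 : ∀ᶠ u in nhdsWithin s (Set.Iio s), slope f s u ≤ 0 := by
    filter_upwards [Ioo_mem_nhdsLT_of_mem (Set.mem_Ioc.mpr ⟨hspos, le_refl s⟩)] with u hu
    have hfu : 0 < f u := hleft u hu.1.le hu.2
    have hs : slope f s u = (f u - f s) / (u - s) := slope_def_field f s u
    rw [hs, hfs0, sub_zero]
    exact div_nonpos_of_nonneg_of_nonpos hfu.le (by linarith [hu.2])
  have hle0 : d ≤ 0 := le_of_tendsto h1 h2
  linarith
end

section
/- Let τ_θ > 0, V₀, A ∈ ℝ, 0 < d < 1 and T > 0, let θ_∞ : ℝ → ℝ be Lipschitz, and let I : ℝ → ℝ be the T-periodic square wave with I(t) = A for t ∈ (nT, nT + dT] and I(t) = 0 for t ∈ (nT + dT, (n+1)T], n ∈ ℤ. Then the periodically forced system V' = −V + V₀ + I(t), τ_θ θ' = −θ + θ_∞(V) has exactly one T-periodic solution; more precisely, there is exactly one continuous pair (V, θ) : ℝ → ℝ² which satisfies V' = −V + V₀ + A, τ_θ θ' = −θ + θ_∞(V) on each open interval (nT, nT + dT) and V' = −V + V₀, τ_θ θ' = −θ + θ_∞(V)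 on each open interval (nT + dT, (n+1)T), and which satisfies V(t+T) = V(t) and θ(t+T) = θ(t) for all t. -/
open Real Set Filter

namespace ForcedThresholdAux


/-- MVT step: a solution of `f' = -r f` on an open interval satisfies
`f b * exp (r b) = f a * exp (r a)`. -/
lemma decay_const (r : ℝ) (f : ℝ → ℝ) {a b : ℝ} (hab : a ≤ b)
    (hc : ContinuousOn f (Icc a b))
    (hd : ∀ t ∈ Ioo a b, HasDerivAt f (-(r * f t)) t) :
    f b * Real.exp (r * b) = f a * Real.exp (r * a) := by
  rcases eq_or_lt_of_le hab with rfl | hab'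
  · rfl
  · have hψc : ContinuousOn (fun t => f t * Real.exp (r * t)) (Icc a b) :=
      hc.mul ((Real.continuous_exp.comp (continuous_const.mul continuous_id)).continuousOn)
  
    have hψd : ∀ t ∈ Ioo a b,
        HasDerivAt (fun t => f t * Real.exp (r * t)) (0) t := by
      intro t ht
      have h1 : HasDerivAt (fun t => Real.exp (r * t)) (Real.exp (r * t) * r) t :=
        (Real.hasDerivAt_exp (r * t)).comp t ((hasDerivAt_id t).const_mul r) |>.congr_deriv (by ring)
      have := (hd t ht).mul h1
      convert this using 1
      · rfl
      · rfl
      · rfl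
      ring
    obtain ⟨c, hc', hc0⟩ := exists_hasDerivAt_eq_slope (fun t => f t * Real.exp (r * t))
      (fun _ => 0) hab' hψc hψd
    have hne : b - a ≠ 0 := sub_ne_zero.mpr hab'.ne'
    field_simp at hc0
    linarith [hc0]

lemma periodic_decay_zero {r T δ : ℝ} (hr : 0 < r) (hT : 0 < T) (hδ0 : 0 < δ) (hδ1 : δ < T)
    (f : ℝ → ℝ) (hc : Continuous f) (hper : ∀ t, f (t + T) = f t)
    (hd1 : ∀ n : ℤ, ∀ t ∈ Ioo ((n : ℝ) * T) ((n : ℝ) * T + δ), HasDerivAt f (-(r * f t)) t)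
    (hd2 : ∀ n : ℤ, ∀ t ∈ Ioo ((n : ℝ) * T + δ) (((n : ℝ) + 1) * T), HasDerivAt f (-(r * f t)) t) :
    ∀ t, f t = 0 := by
  -- propagation on the first piece
  have hs1 : ∀ (n : ℤ) (t : ℝ), (n : ℝ) * T ≤ t → t ≤ (n : ℝ) * T + δ →
      f t * Real.exp (r * t) = f ((n : ℝ) * T) * Real.exp (r * ((n : ℝ) * T)) := by
    intro n t h1 h2
    exact decay_const r f h1 (hc.continuousOn) (fun s hs =>
      hd1 n s ⟨hs.1, lt_of_lt_of_le hs.2 h2⟩)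
  have hs2 : ∀ (n : ℤ) (t : ℝ), (n : ℝ) * T + δ ≤ t → t ≤ ((n : ℝ) + 1) * T →
      f t * Real.exp (r * t) = f ((n : ℝ) * T + δ) * Real.exp (r * ((n : ℝ) * T + δ)) := by
    intro n t h1 h2
    exact decay_const r f h1 (hc.continuousOn) (fun s hs =>
      hd2 n s ⟨hs.1, lt_of_lt_of_le hs.2 h2⟩)
  have hδT : δ ≤ T := hδ1.le
  -- f 0 = 0
  have h0T : f T * Real.exp (r * T) = f 0 * Real.exp (r * 0) := by
    have e1 := hs1 0 δ (by simpa using hδ0.le) (by simp)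
    have e2 := hs2 0 T (by simpa using hδ1.le) (by norm_num)
    simp only [Int.cast_zero, zero_mul, zero_add] at e1 e2
    rw [e2, e1]
  have hf0 : f 0 = 0 := by
    have hfT : f T = f 0 := by have := hper 0; simpa using this
    rw [hfT] at h0T
    rw [show r * 0 = 0 by ring, Real.exp_zero] at h0T
    have hexp : (1 : ℝ) < Real.exp (r * T) := by
      rw [← Real.exp_zero]
      exact Real.exp_lt_exp.mpr (by positivity)
    nlinarith
  have hp : Function.Periodic f T := hper
  have hfnT : ∀ n : ℤ, f ((n : ℝ) * T) = 0 := fun n => by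
    rw [hp.int_mul_eq n, hf0]
  intro t
  set n : ℤ := ⌊t / T⌋ with hn
  have h1 : (n : ℝ) * T ≤ t := (le_div_iff₀ hT).mp (Int.floor_le (t / T))
  have h2 : t < ((n : ℝ) + 1) * T := (div_lt_iff₀ hT).mp (Int.lt_floor_add_one (t / T))
  have hexp_ne : ∀ x : ℝ, Real.exp x ≠ 0 := fun x => (Real.exp_pos x).ne'
  by_cases hcase : t ≤ (n : ℝ) * T + δ
  · have := hs1 n t h1 hcase
    rw [hfnT n, zero_mul] at this
    exact (mul_eq_zero.mp this).resolve_right (hexp_ne _)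
  · push_neg at hcase
    have hδ0' : f ((n : ℝ) * T + δ) = 0 := by
      have := hs1 n ((n : ℝ) * T + δ) (by linarith) le_rfl
      rw [hfnT n, zero_mul] at this
      exact (mul_eq_zero.mp this).resolve_right (hexp_ne _)
    have := hs2 n t hcase.le h2.le
    rw [hδ0', zero_mul] at this
    exact (mul_eq_zero.mp this).resolve_right (hexp_ne _)



noncomputable def pp (T t : ℝ) : ℝ := T * Int.fract (t / T)

noncomputable def vv0 (V₀ A d T : ℝ) : ℝ :=
  (V₀ * (1 - Real.exp (-((1 - d) * T))) +
    (V₀ + A) * Real.exp (-((1 - d) * T)) * (1 - Real.exp (-(d * T)))) / (1 - Real.exp (-T))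

noncomputable def vv1 (V₀ A d T : ℝ) : ℝ :=
  (V₀ + A) + (vv0 V₀ A d T - (V₀ + A)) * Real.exp (-(d * T))

noncomputable def Vsol (V₀ A d T t : ℝ) : ℝ :=
  if pp T t < d * T then (V₀ + A) + (vv0 V₀ A d T - (V₀ + A)) * Real.exp (-(pp T t))
  else V₀ + (vv1 V₀ A d T - V₀) * Real.exp (-(pp T t - d * T))

lemma one_sub_exp_neg_ne {x : ℝ} (hx : 0 < x) : 1 - Real.exp (-x) ≠ 0 := by
  have : Real.exp (-x) < 1 := Real.exp_lt_one_iff.mpr (by linarith)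
  linarith

lemma v0_eq (V₀ A d T : ℝ) (hT : 0 < T) :
    vv0 V₀ A d T = V₀ + (vv1 V₀ A d T - V₀) * Real.exp (-((1 - d) * T)) := by
  have h : Real.exp (-(d * T)) * Real.exp (-((1 - d) * T)) = Real.exp (-T) := by
    rw [← Real.exp_add]; ring_nf
  have hne : 1 - Real.exp (-T) ≠ 0 := one_sub_exp_neg_ne hT
  rw [vv1, vv0, ← h] at *
  have key := div_mul_cancel₀ (V₀ * (1 - Real.exp (-((1 - d) * T))) +
      (V₀ + A) * Real.exp (-((1 - d) * T)) * (1 - Real.exp (-(d * T)))) hne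
  linear_combination key

lemma pp_eq {T : ℝ} (hT : 0 < T) (n : ℤ) {t : ℝ} (h1 : (n : ℝ) * T ≤ t)
    (h2 : t < (n : ℝ) * T + T) : pp T t = t - (n : ℝ) * T := by
  have hfl : ⌊t / T⌋ = n := by
    rw [Int.floor_eq_iff]
    constructor
    · exact (le_div_iff₀ hT).mpr (by linarith)
    · rw [div_lt_iff₀ hT]; push_cast; linarith
  rw [pp, Int.fract, hfl]
  field_simp

lemma pp_period {T : ℝ} (hT : T ≠ 0) (t : ℝ) : pp T (t + T) = pp T t := by
  rw [pp, pp, show (t + T) / T = t / T + 1 by field_simp, Int.fract_add_one]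

lemma Vsol_periodic (V₀ A d T : ℝ) (hT : T ≠ 0) (t : ℝ) :
    Vsol V₀ A d T (t + T) = Vsol V₀ A d T t := by
  rw [Vsol, Vsol, pp_period hT]

lemma Vsol_eqOn_on (V₀ A d T : ℝ) (hd0 : 0 < d) (hd1 : d < 1) (hT : 0 < T) (n : ℤ) :
    EqOn (Vsol V₀ A d T)
      (fun t => (V₀ + A) + (vv0 V₀ A d T - (V₀ + A)) * Real.exp (-(t - (n : ℝ) * T)))
      (Icc ((n : ℝ) * T) ((n : ℝ) * T + d * T)) := by
  intro t ⟨h1, h2⟩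
  have hdT : d * T < T := by nlinarith
  have hpp : pp T t = t - (n : ℝ) * T := pp_eq hT n h1 (by linarith)
  rcases lt_or_eq_of_le h2 with h2' | h2'
  · rw [Vsol, hpp, if_pos (by linarith)]
  · rw [Vsol, hpp, if_neg (by simp [h2'])]
    simp only [h2']
    rw [show (n:ℝ)*T + d*T - (n:ℝ)*T - d*T = 0 by ring, neg_zero, Real.exp_zero, mul_one]
    rw [show (n:ℝ)*T + d*T - (n:ℝ)*T = d*T by ring, vv1]
    ring

lemma Vsol_eqOn_off (V₀ A d T : ℝ) (hd0 : 0 < d) (hd1 : d < 1) (hT : 0 < T) (n : ℤ) :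
    EqOn (Vsol V₀ A d T)
      (fun t => V₀ + (vv1 V₀ A d T - V₀) * Real.exp (-(t - (n : ℝ) * T - d * T)))
      (Icc ((n : ℝ) * T + d * T) (((n : ℝ) + 1) * T)) := by
  intro t ⟨h1, h2⟩
  have hdT : 0 < d * T := by positivity
  rcases lt_or_eq_of_le h2 with h2' | h2'
  · have hpp : pp T t = t - (n : ℝ) * T := pp_eq hT n (by linarith) (by nlinarith)
    rw [Vsol, hpp, if_neg (by simp; linarith)]
  · have hpp : pp T t = 0 := by
      have := pp_eq hT (n + 1) (t := t) (by push_cast; nlinarith) (by push_cast; nlinarith)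
      push_cast at this
      rw [this, h2']; ring
    rw [Vsol, hpp, if_pos (by linarith), neg_zero, Real.exp_zero, mul_one]
    simp only [h2']
    rw [show -(((n:ℝ) + 1) * T - (n:ℝ)*T - d*T) = -((1 - d) * T) by ring]
    linear_combination v0_eq V₀ A d T hT


lemma Vsol_continuous (V₀ A d T : ℝ) (hd0 : 0 < d) (hd1 : d < 1) (hT : 0 < T) :
    Continuous (Vsol V₀ A d T) := by
  rw [continuous_iff_continuousAt]
  intro t
  set n : ℤ := ⌊t / T⌋ with hn
  have h1 : (n : ℝ) * T ≤ t := (le_div_iff₀ hT).mp (Int.floor_le (t / T))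
  have h2 : t < ((n : ℝ) + 1) * T := (div_lt_iff₀ hT).mp (Int.lt_floor_add_one (t / T))
  have hdT0 : 0 < d * T := by positivity
  have hdT1 : d * T < T := by nlinarith
  -- helper: continuity within a closed piece
  have hcw : ∀ a b : ℝ, ∀ F : ℝ → ℝ, Continuous F → EqOn (Vsol V₀ A d T) F (Icc a b) →
      ContinuousWithinAt (Vsol V₀ A d T) (Icc a b) t := by
    intro a b F hF hEq
    by_cases ht : t ∈ Icc a b
    · exact (hF.continuousOn.congr hEq) t ht
    · exact continuousWithinAt_of_notMem_closure (by rwa [closure_Icc])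
  have c1 : ContinuousWithinAt (Vsol V₀ A d T) (Icc (((n:ℝ)-1) * T + d * T) ((n:ℝ) * T)) t := by
    have h := Vsol_eqOn_off V₀ A d T hd0 hd1 hT (n - 1)
    have hcast : ((n - 1 : ℤ) : ℝ) = (n : ℝ) - 1 := by push_cast; ring
    rw [hcast, show ((n:ℝ) - 1 + 1) * T = (n:ℝ) * T from by ring] at h
    exact hcw _ _ _ (by fun_prop) h
  have c2 : ContinuousWithinAt (Vsol V₀ A d T) (Icc ((n:ℝ) * T) ((n:ℝ) * T + d * T)) t :=
    hcw _ _ _ (by fun_prop) (Vsol_eqOn_on V₀ A d T hd0 hd1 hT n)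
  have c3 : ContinuousWithinAt (Vsol V₀ A d T) (Icc ((n:ℝ) * T + d * T) (((n:ℝ)+1) * T)) t :=
    hcw _ _ _ (by fun_prop) (Vsol_eqOn_off V₀ A d T hd0 hd1 hT n)
  have c4 : ContinuousWithinAt (Vsol V₀ A d T) (Icc (((n:ℝ)+1) * T) (((n:ℝ)+1) * T + d * T)) t := by
    have h := Vsol_eqOn_on V₀ A d T hd0 hd1 hT (n + 1)
    have hcast : ((n + 1 : ℤ) : ℝ) = (n : ℝ) + 1 := by push_cast; ring
    rw [hcast] at h
    exact hcw _ _ _ (by fun_prop) h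
  have hu : ContinuousWithinAt (Vsol V₀ A d T)
      (Icc (((n:ℝ)-1) * T + d * T) (((n:ℝ)+1) * T + d * T)) t := by
    have := ((c1.union c2).union c3).union c4
    rwa [Icc_union_Icc_eq_Icc (by nlinarith) (by nlinarith),
      Icc_union_Icc_eq_Icc (by nlinarith) (by nlinarith),
      Icc_union_Icc_eq_Icc (by nlinarith) (by nlinarith)] at this
  exact hu.continuousAt (Icc_mem_nhds (by nlinarith) (by nlinarith))

lemma Vsol_hasDeriv_on (V₀ A d T : ℝ) (hd0 : 0 < d) (hd1 : d < 1) (hT : 0 < T) (n : ℤ)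
    {t : ℝ} (ht : t ∈ Ioo ((n : ℝ) * T) ((n : ℝ) * T + d * T)) :
    HasDerivAt (Vsol V₀ A d T) (-(Vsol V₀ A d T t) + V₀ + A) t := by
  have hmem : Icc ((n : ℝ) * T) ((n : ℝ) * T + d * T) ∈ nhds t := Icc_mem_nhds ht.1 ht.2
  have hev : Vsol V₀ A d T =ᶠ[nhds t]
      (fun s => (V₀ + A) + (vv0 V₀ A d T - (V₀ + A)) * Real.exp (-(s - (n : ℝ) * T))) :=
    Filter.eventuallyEq_of_mem hmem (Vsol_eqOn_on V₀ A d T hd0 hd1 hT n)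
  have hF : HasDerivAt (fun s => (V₀ + A) + (vv0 V₀ A d T - (V₀ + A)) * Real.exp (-(s - (n : ℝ) * T)))
      ((vv0 V₀ A d T - (V₀ + A)) * (Real.exp (-(t - (n : ℝ) * T)) * (-1))) t := by
    have hb : HasDerivAt (fun s : ℝ => -(s - (n : ℝ) * T)) (-1) t :=
      ((hasDerivAt_id t).sub_const _).neg
    exact ((hb.exp).const_mul _).const_add _
  have hD := hF.congr_of_eventuallyEq hev
  have hVt : Vsol V₀ A d T t = (V₀ + A) + (vv0 V₀ A d T - (V₀ + A)) * Real.exp (-(t - (n : ℝ) * T)) :=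
    Vsol_eqOn_on V₀ A d T hd0 hd1 hT n ⟨ht.1.le, ht.2.le⟩
  convert hD using 1
  · rfl
  · rfl
  rw [hVt]; ring

lemma Vsol_hasDeriv_off (V₀ A d T : ℝ) (hd0 : 0 < d) (hd1 : d < 1) (hT : 0 < T) (n : ℤ)
    {t : ℝ} (ht : t ∈ Ioo ((n : ℝ) * T + d * T) (((n : ℝ) + 1) * T)) :
    HasDerivAt (Vsol V₀ A d T) (-(Vsol V₀ A d T t) + V₀) t := by
  have hmem : Icc ((n : ℝ) * T + d * T) (((n : ℝ) + 1) * T) ∈ nhds t := Icc_mem_nhds ht.1 ht.2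
  have hev : Vsol V₀ A d T =ᶠ[nhds t]
      (fun s => V₀ + (vv1 V₀ A d T - V₀) * Real.exp (-(s - (n : ℝ) * T - d * T))) :=
    Filter.eventuallyEq_of_mem hmem (Vsol_eqOn_off V₀ A d T hd0 hd1 hT n)
  have hF : HasDerivAt (fun s => V₀ + (vv1 V₀ A d T - V₀) * Real.exp (-(s - (n : ℝ) * T - d * T)))
      ((vv1 V₀ A d T - V₀) * (Real.exp (-(t - (n : ℝ) * T - d * T)) * (-1))) t := by
    have hb : HasDerivAt (fun s : ℝ => -(s - (n : ℝ) * T - d * T)) (-1) t :=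
      (((hasDerivAt_id t).sub_const _).sub_const _).neg
    exact ((hb.exp).const_mul _).const_add _
  have hD := hF.congr_of_eventuallyEq hev
  have hVt : Vsol V₀ A d T t = V₀ + (vv1 V₀ A d T - V₀) * Real.exp (-(t - (n : ℝ) * T - d * T)) :=
    Vsol_eqOn_off V₀ A d T hd0 hd1 hT n ⟨ht.1.le, ht.2.le⟩
  convert hD using 1
  · rfl
  · rfl
  rw [hVt]; ring



noncomputable def Jint (τ : ℝ) (g : ℝ → ℝ) (t : ℝ) : ℝ :=
  ∫ s in (0:ℝ)..t, Real.exp (s / τ) * g s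

noncomputable def θzero (τ T : ℝ) (g : ℝ → ℝ) : ℝ :=
  (Real.exp (-(T / τ)) * ((1 / τ) * Jint τ g T)) / (1 - Real.exp (-(T / τ)))

noncomputable def θsol (τ T : ℝ) (g : ℝ → ℝ) (t : ℝ) : ℝ :=
  Real.exp (-(t / τ)) * (θzero τ T g + (1 / τ) * Jint τ g t)

lemma integrand_continuous (τ : ℝ) {g : ℝ → ℝ} (hg : Continuous g) :
    Continuous (fun s => Real.exp (s / τ) * g s) :=
  (Real.continuous_exp.comp (continuous_id.div_const τ)).mul hg

lemma Jint_hasDeriv (τ : ℝ) {g : ℝ → ℝ} (hg : Continuous g) (t : ℝ) :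
    HasDerivAt (Jint τ g) (Real.exp (t / τ) * g t) t := by
  have hc := integrand_continuous τ hg
  exact intervalIntegral.integral_hasDerivAt_right
    (hc.intervalIntegrable _ _) (hc.stronglyMeasurableAtFilter _ _) hc.continuousAt

lemma θsol_hasDeriv {τ : ℝ} (hτ : 0 < τ) (T : ℝ) {g : ℝ → ℝ} (hg : Continuous g) (t : ℝ) :
    HasDerivAt (θsol τ T g) ((-(θsol τ T g t) + g t) / τ) t := by
  have hE : HasDerivAt (fun t : ℝ => Real.exp (-(t / τ)))
      (Real.exp (-(t / τ)) * (-(1/τ))) t := by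
    have : HasDerivAt (fun t : ℝ => -(t / τ)) (-(1/τ)) t := by
      exact ((hasDerivAt_id t).div_const τ).neg
    exact this.exp
  have hI : HasDerivAt (fun t => θzero τ T g + (1 / τ) * Jint τ g t)
      ((1 / τ) * (Real.exp (t / τ) * g t)) t :=
    ((Jint_hasDeriv τ hg t).const_mul _).const_add _
  have hD := hE.mul hI
  have hee : Real.exp (-(t / τ)) * Real.exp (t / τ) = 1 := by
    rw [← Real.exp_add]; simp
  convert hD using 1
  · rfl
  · rfl
  · rfl
  rw [θsol]
  linear_combination (-(g t) / τ) * hee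

lemma θsol_periodic {τ T : ℝ} (hτ : 0 < τ) (hT : 0 < T) {g : ℝ → ℝ} (hg : Continuous g)
    (hgper : ∀ t, g (t + T) = g t) (t : ℝ) : θsol τ T g (t + T) = θsol τ T g t := by
  have hc := integrand_continuous τ hg
  have hJ : Jint τ g (t + T) = Jint τ g T + Real.exp (T / τ) * Jint τ g t := by
    have hsplit : Jint τ g T + (∫ s in T..(t + T), Real.exp (s / τ) * g s) = Jint τ g (t + T) :=
      intervalIntegral.integral_add_adjacent_intervals
        (hc.intervalIntegrable _ _) (hc.intervalIntegrable _ _)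
    have hshift : (∫ s in T..(t + T), Real.exp (s / τ) * g s)
        = ∫ s in (0:ℝ)..t, Real.exp ((s + T) / τ) * g (s + T) := by
      rw [intervalIntegral.integral_comp_add_right (fun s => Real.exp (s / τ) * g s) T]
      norm_num
    have hcong : (∫ s in (0:ℝ)..t, Real.exp ((s + T) / τ) * g (s + T))
        = ∫ s in (0:ℝ)..t, Real.exp (T / τ) * (Real.exp (s / τ) * g s) := by
      congr 1
      ext s
      rw [hgper s, show (s + T) / τ = s / τ + T / τ by ring, Real.exp_add]
      ring
    rw [← hsplit, hshift, hcong, intervalIntegral.integral_const_mul]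
    simp [Jint]
  have hθ0 : Real.exp (-(T / τ)) * (θzero τ T g + (1 / τ) * Jint τ g T) = θzero τ T g := by
    have hne : 1 - Real.exp (-(T / τ)) ≠ 0 := by
      have hpos : 0 < T / τ := div_pos hT hτ
      have : Real.exp (-(T / τ)) < 1 := Real.exp_lt_one_iff.mpr (by linarith)
      linarith
    have h' : θzero τ T g * (1 - Real.exp (-(T / τ)))
        = Real.exp (-(T / τ)) * ((1 / τ) * Jint τ g T) := by
      rw [θzero, div_mul_cancel₀ _ hne]
    linear_combination -h'
  have hee : Real.exp (-(T / τ)) * Real.exp (T / τ) = 1 := by rw [← Real.exp_add]; simp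
  have hsplitexp : Real.exp (-((t + T) / τ)) = Real.exp (-(t / τ)) * Real.exp (-(T / τ)) := by
    rw [← Real.exp_add]; ring_nf
  rw [θsol, θsol, hJ, hsplitexp]
  linear_combination (Real.exp (-(t / τ)) * (1/τ) * Jint τ g t) * hee
    + Real.exp (-(t / τ)) * hθ0


end ForcedThresholdAux

open ForcedThresholdAux in
/-- The periodically forced threshold model `V' = −V + V₀ + I(t)`, `τ_θ θ' = −θ + θ_∞(V)`,
with `I` the `T`-periodic square wave of amplitude `A` and duty cycle `d ∈ (0,1)`, has
exactly one `T`-periodic solution: there is exactly one continuous pair `(V, θ)` that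
solves the system with input `A` on each interval `(nT, nT + dT)` and with input `0` on
each interval `(nT + dT, (n+1)T)`, and is `T`-periodic. -/
theorem forced_threshold_model_unique_periodic_solution
    (τ V₀ A d T : ℝ) (hτ : 0 < τ) (hd0 : 0 < d) (hd1 : d < 1) (hT : 0 < T)
    (θinf : ℝ → ℝ) (K : NNReal) (hLip : LipschitzWith K θinf) :
    ∃! p : (ℝ → ℝ) × (ℝ → ℝ),
      Continuous p.1 ∧ Continuous p.2 ∧
      (∀ n : ℤ, ∀ t ∈ Ioo ((n : ℝ) * T) ((n : ℝ) * T + d * T),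
        HasDerivAt p.1 (-p.1 t + V₀ + A) t ∧
        HasDerivAt p.2 ((-p.2 t + θinf (p.1 t)) / τ) t) ∧
      (∀ n : ℤ, ∀ t ∈ Ioo ((n : ℝ) * T + d * T) (((n : ℝ) + 1) * T),
        HasDerivAt p.1 (-p.1 t + V₀) t ∧
        HasDerivAt p.2 ((-p.2 t + θinf (p.1 t)) / τ) t) ∧
      (∀ t : ℝ, p.1 (t + T) = p.1 t ∧ p.2 (t + T) = p.2 t) := by
  have hVc : Continuous (Vsol V₀ A d T) := Vsol_continuous V₀ A d T hd0 hd1 hT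
  have hgc : Continuous (fun t => θinf (Vsol V₀ A d T t)) := hLip.continuous.comp hVc
  have hdT0 : 0 < d * T := by positivity
  have hdT1 : d * T < T := by nlinarith
  have hθc : Continuous (θsol τ T (fun t => θinf (Vsol V₀ A d T t))) :=
    continuous_iff_continuousAt.mpr fun t => (θsol_hasDeriv hτ T hgc t).continuousAt
  refine ⟨(Vsol V₀ A d T, θsol τ T (fun t => θinf (Vsol V₀ A d T t))),
    ⟨hVc, hθc, ?_, ?_, ?_⟩, ?_⟩
  · intro n t ht
    exact ⟨Vsol_hasDeriv_on V₀ A d T hd0 hd1 hT n ht, θsol_hasDeriv hτ T hgc t⟩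
  · intro n t ht
    exact ⟨Vsol_hasDeriv_off V₀ A d T hd0 hd1 hT n ht, θsol_hasDeriv hτ T hgc t⟩
  · intro t
    exact ⟨Vsol_periodic V₀ A d T hT.ne' t,
      θsol_periodic hτ hT hgc (fun s => congrArg θinf (Vsol_periodic V₀ A d T hT.ne' s)) t⟩
  · rintro ⟨q1, q2⟩ ⟨hqc1, hqc2, hqd1, hqd2, hqper⟩
    simp only at hqc1 hqc2 hqd1 hqd2 hqper
    -- first component
    have hw : ∀ t, q1 t - Vsol V₀ A d T t = 0 := by
      refine periodic_decay_zero (r := 1) one_pos hT hdT0 hdT1 _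
        (hqc1.sub hVc) (fun t => by rw [(hqper t).1, Vsol_periodic V₀ A d T hT.ne' t]) ?_ ?_
      · intro n t ht
        have h := ((hqd1 n t ht).1).sub (Vsol_hasDeriv_on V₀ A d T hd0 hd1 hT n ht)
        convert h using 1
        · rfl
        · rfl
        · rfl
        ring
      · intro n t ht
        have h := ((hqd2 n t ht).1).sub (Vsol_hasDeriv_off V₀ A d T hd0 hd1 hT n ht)
        convert h using 1
        · rfl
        · rfl
        · rfl
        ring
    have hq1eq : q1 = Vsol V₀ A d T := funext fun t => sub_eq_zero.mp (hw t)
    -- second component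
    have hu : ∀ t, q2 t - θsol τ T (fun s => θinf (Vsol V₀ A d T s)) t = 0 := by
      refine periodic_decay_zero (r := 1 / τ) (by positivity) hT hdT0 hdT1 _
        (hqc2.sub hθc) (fun t => by
          rw [(hqper t).2, θsol_periodic hτ hT hgc
            (fun s => congrArg θinf (Vsol_periodic V₀ A d T hT.ne' s)) t]) ?_ ?_
      · intro n t ht
        have h := ((hqd1 n t ht).2).sub (θsol_hasDeriv hτ T hgc t)
        convert h using 1
        · rfl
        · rfl
        · rfl
        rw [hq1eq]
        ring
      · intro n t ht
        have h := ((hqd2 n t ht).2).sub (θsol_hasDeriv hτ T hgc t)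
        convert h using 1
        · rfl
        · rfl
        · rfl
        rw [hq1eq]
        ring
    have hq2eq : q2 = θsol τ T (fun s => θinf (Vsol V₀ A d T s)) :=
      funext fun t => sub_eq_zero.mp (hu t)
    simp only [Prod.mk.injEq]
    exact ⟨hq1eq, hq2eq⟩
end
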